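/- Let (X,d) be a metric space, let v_i, s_i, v_j, s_j ∈ X and r ≥ 0 with d(s_i, v_i) < d(s_j, v_j) − 4r. Let A, B ⊆ X be finite sets with d(s_i, x) ≤ 2r for all x ∈ A and d(s_j, y) ≤ 2r for all y ∈ B, and suppose |A|·|B| ≥ 12·ln(n/δ) for some integer n ≥ 1 and δ ∈ (0,1). Let p ≤ 0.4 and let (B_{x,y})_{(x,y) ∈ A×B} be independent Boolean random variables with ℙ(B_{x,y} = true) ≥ 1 − p for each pair, where B_{x,y} = true represents a correct (Yes) answer to the query O(v_i,x,v_j,y). Let FCount = |{(x,y) ∈ A×B : B_{x,y} = true}|. Then ℙ(FCount ≥ 0.3·|A|·|B|) ≥ 1 − δ/n². -/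

import Mathlib

open MeasureTheory ProbabilityTheory

/-- **ClusterComp guarantee (Lemma, probabilistic noise).**
`A` and `B` are cores of the clusters of `s_i` and `s_j` (within distance `2r` of the
respective centers) and `d(s_i,v_i) < d(s_j,v_j) − 4r`, so the correct answer to each
query `O(v_i, x, v_j, y)` is Yes. Each query is answered correctly (event
`Bq (x,y) = true`), independently, with probability at least `1 − p` where `p ≤ 0.4`.
If `|A|·|B| ≥ 12·ln(n/δ)`, then `FCount ≥ 0.3·|A|·|B|` with probability at least
`1 − δ/n²`. -/
theorem stmt_9 {X : Type*} [MetricSpace X] (vi si vj sj : X) (r : ℝ) (hr : 0 ≤ r)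
    (hsep : dist si vi < dist sj vj - 4 * r)
    (A B : Finset X)
    (hA : ∀ x ∈ A, dist si x ≤ 2 * r) (hB : ∀ y ∈ B, dist sj y ≤ 2 * r)
    (n : ℕ) (hn : 1 ≤ n) (δ : ℝ) (hδ : δ ∈ Set.Ioo (0 : ℝ) 1)
    (hcard : 12 * Real.log (n / δ) ≤ (A.card : ℝ) * (B.card : ℝ))
    (p : ℝ) (hp : p ≤ 0.4)
    {Ω : Type*} [MeasurableSpace Ω] (P : Measure Ω) [IsProbabilityMeasure P]
    (Bq : X → X → Ω → Bool) (hmeas : ∀ x y, Measurable (Bq x y))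
    (hindep : iIndepFun
      (fun xy : (A ×ˢ B : Finset (X × X)) => Bq (xy : X × X).1 (xy : X × X).2) P)
    (hcorrect : ∀ x ∈ A, ∀ y ∈ B, 1 - p ≤ (P {ω | Bq x y ω = true}).toReal) :
    1 - δ / (n : ℝ) ^ 2 ≤
      (P {ω | 0.3 * ((A.card : ℝ) * (B.card : ℝ)) ≤
        (((A ×ˢ B).filter (fun xy => Bq xy.1 xy.2 ω = true)).card : ℝ)}).toReal := by
  classical
  set N : ℝ := (A.card : ℝ) * (B.card : ℝ) with hNdef
  have hN0 : 0 ≤ N := by positivity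
  set t : ℝ := Real.log 3.5 with htdef
  have het : Real.exp t = 3.5 := Real.exp_log (by norm_num)
  have ht : 0 ≤ t := Real.log_nonneg (by norm_num)
  -- the failure indicators
  set g : Bool → ℝ := fun b => if b then 0 else 1 with hgdef
  set Z : (A ×ˢ B : Finset (X × X)) → Ω → ℝ :=
    fun i => g ∘ (fun ω => Bq (i : X × X).1 (i : X × X).2 ω) with hZdef
  have hZmeas : ∀ i, Measurable (Z i) := fun i =>
    measurable_from_top.comp (hmeas _ _)
  have hZ01 : ∀ i ω, Z i ω = 0 ∨ Z i ω = 1 := by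
    intro i ω
    by_cases h : Bq (i : X × X).1 (i : X × X).2 ω <;> simp [hZdef, hgdef, h]
  set S : Ω → ℝ := fun ω => ∑ i, Z i ω with hSdef
  have hSmeas : Measurable S := by
    apply Finset.measurable_sum
    exact fun i _ => hZmeas i
  have hSsum : (∑ i, Z i) = S := by
    funext ω; simp [hSdef, Finset.sum_apply]
  -- pointwise relation between FCount and S
  have hcount : ∀ ω,
      (((A ×ˢ B).filter (fun xy => Bq xy.1 xy.2 ω = true)).card : ℝ) + S ω = N := by
    intro ω
    have h1 : (((A ×ˢ B).filter (fun xy => Bq xy.1 xy.2 ω = true)).card : ℝ)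
        = ∑ xy ∈ A ×ˢ B, (if Bq xy.1 xy.2 ω = true then (1:ℝ) else 0) :=
      (Finset.sum_boole _ _).symm
    have h2 : S ω = ∑ xy ∈ A ×ˢ B, (if Bq xy.1 xy.2 ω = true then (0:ℝ) else 1) := by
      rw [hSdef]
      rw [← Finset.sum_coe_sort (A ×ˢ B)
        (fun xy => (if Bq xy.1 xy.2 ω = true then (0:ℝ) else 1))]
      exact Finset.sum_congr rfl fun i _ => by
        by_cases h : Bq (i : X × X).1 (i : X × X).2 ω <;> simp [hZdef, hgdef, h]
    rw [h1, h2, ← Finset.sum_add_distrib]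
    have : ∀ xy ∈ A ×ˢ B,
        ((if Bq xy.1 xy.2 ω = true then (1:ℝ) else 0)
          + (if Bq xy.1 xy.2 ω = true then (0:ℝ) else 1)) = 1 := by
      intro xy _; by_cases h : Bq xy.1 xy.2 ω <;> simp [h]
    rw [Finset.sum_congr rfl this, Finset.sum_const, Finset.card_product]
    simp [hNdef]
  -- independence of the indicators
  have hindep' : iIndepFun Z P :=
    hindep.comp (fun _ => g) (fun _ => measurable_from_top)
  -- mgf bound for each coordinate
  have hmgf : ∀ i, mgf (Z i) P t ≤ 2 := by
    intro i
    obtain ⟨hx, hy⟩ := Finset.mem_product.mp i.2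
    set F : Set Ω := {ω | Bq (i : X × X).1 (i : X × X).2 ω = false} with hFdef
    have hF : MeasurableSet F := hmeas _ _ (measurableSet_singleton false)
    have hFc : F = {ω | Bq (i : X × X).1 (i : X × X).2 ω = true}ᶜ := by
      ext ω; simp [hFdef, Bool.not_eq_true]
    have hT : MeasurableSet {ω | Bq (i : X × X).1 (i : X × X).2 ω = true} :=
      hmeas _ _ (measurableSet_singleton true)
    have hq : (P F).toReal ≤ p := by
      rw [hFc, prob_compl_eq_one_sub hT,
        ENNReal.toReal_sub_of_le prob_le_one (by norm_num)]
      have := hcorrect _ hx _ hy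
      simp only [ENNReal.toReal_one]
      linarith
    have hmgf_eq : mgf (Z i) P t = (P F).toReal * (Real.exp t - 1) + 1 := by
      rw [mgf]
      have heq : (fun ω => Real.exp (t * Z i ω))
          = fun ω => F.indicator (fun _ => Real.exp t - 1) ω + 1 := by
        funext ω
        by_cases h : Bq (i : X × X).1 (i : X × X).2 ω <;>
          simp [hZdef, hgdef, h, Set.indicator_apply, hFdef, Real.exp_zero]
      rw [heq, integral_add ((integrable_const _).indicator hF) (integrable_const 1),
        integral_indicator_const _ hF]
      simp [smul_eq_mul, measureReal_def]
    have hqnn : 0 ≤ (P F).toReal := ENNReal.toReal_nonneg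
    rw [hmgf_eq, het]
    nlinarith
  -- integrability of exp (t * S)
  have hSle : ∀ ω, S ω ≤ N := by
    intro ω
    have h2 : S ω = ∑ xy ∈ A ×ˢ B, (if Bq xy.1 xy.2 ω = true then (0:ℝ) else 1) := by
      have := hcount ω
      have h1 : (((A ×ˢ B).filter (fun xy => Bq xy.1 xy.2 ω = true)).card : ℝ)
          = ∑ xy ∈ A ×ˢ B, (if Bq xy.1 xy.2 ω = true then (1:ℝ) else 0) :=
        (Finset.sum_boole _ _).symm
      -- redo: bound each Z i ω by 1
      rw [hSdef]
      rw [← Finset.sum_coe_sort (A ×ˢ B)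
        (fun xy => (if Bq xy.1 xy.2 ω = true then (0:ℝ) else 1))]
      exact Finset.sum_congr rfl fun i _ => by
        by_cases h : Bq (i : X × X).1 (i : X × X).2 ω <;> simp [hZdef, hgdef, h]
    rw [h2]
    calc ∑ xy ∈ A ×ˢ B, (if Bq xy.1 xy.2 ω = true then (0:ℝ) else 1)
        ≤ ∑ _xy ∈ A ×ˢ B, (1:ℝ) := by
          apply Finset.sum_le_sum
          intro xy _; by_cases h : Bq xy.1 xy.2 ω <;> simp [h]
      _ = N := by rw [Finset.sum_const, Finset.card_product]; simp [hNdef]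
  have hint : Integrable (fun ω => Real.exp (t * S ω)) P := by
    refine (integrable_const (Real.exp (t * N))).mono'
      ((hSmeas.const_mul t).exp.aestronglyMeasurable) (ae_of_all _ fun ω => ?_)
    rw [Real.norm_eq_abs, abs_of_pos (Real.exp_pos _)]
    exact Real.exp_le_exp.mpr (mul_le_mul_of_nonneg_left (hSle ω) ht)
  -- Chernoff bound
  have hcher : (P {ω | 0.7 * N ≤ S ω}).toReal ≤
      Real.exp (-t * (0.7 * N)) * mgf S P t :=
    measure_ge_le_exp_mul_mgf (0.7 * N) ht hint
  have hprod : mgf S P t ≤ 2 ^ (A.card * B.card) := by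
    rw [← hSsum, hindep'.mgf_sum hZmeas]
    calc ∏ i, mgf (Z i) P t ≤ ∏ _i : (A ×ˢ B : Finset (X × X)), (2:ℝ) :=
          Finset.prod_le_prod (fun i _ => mgf_nonneg) (fun i _ => hmgf i)
      _ = 2 ^ (A.card * B.card) := by
          rw [Finset.prod_const, Finset.card_univ, Fintype.card_coe, Finset.card_product]
  -- numeric constant
  have hc : (1/6 : ℝ) ≤ 0.7 * t - Real.log 2 := by
    have e2 : Real.log ((823543:ℝ)/131072) = 7 * t - 10 * Real.log 2 := by
      rw [htdef, show ((823543:ℝ)/131072) = 3.5^7 / 2^10 by norm_num,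
        Real.log_div (by positivity) (by positivity), Real.log_pow, Real.log_pow]
      push_cast; ring
    have e3 : (5/3 : ℝ) ≤ Real.log ((823543:ℝ)/131072) := by
      rw [Real.le_log_iff_exp_le (by norm_num)]
      have h5 : Real.exp (5/3) ^ 3 = Real.exp 5 := by
        rw [← Real.exp_nat_mul]; norm_num
      have h7 : Real.exp 5 = Real.exp 1 ^ 5 := by rw [← Real.exp_nat_mul]; norm_num
      have h6 : Real.exp 5 ≤ ((823543:ℝ)/131072)^3 := by
        rw [h7]
        calc Real.exp 1 ^ 5 ≤ (2.7182818286:ℝ)^5 :=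
              pow_le_pow_left₀ (Real.exp_pos 1).le Real.exp_one_lt_d9.le 5
          _ ≤ _ := by norm_num
      exact le_of_pow_le_pow_left₀ (by norm_num) (by norm_num) (h5 ▸ h6)
    linarith
  -- combine: tail probability ≤ δ / n²
  set L : ℝ := Real.log (n / δ) with hLdef
  have hnpos : (0:ℝ) < n := by exact_mod_cast hn
  have h1n : (1:ℝ) ≤ n := by exact_mod_cast hn
  have hL0 : 0 ≤ L := Real.log_nonneg (by
    rw [le_div_iff₀ hδ.1]; have := hδ.2.le; nlinarith)
  have hexpL : Real.exp (-(2*L)) = (δ / n)^2 := by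
    rw [show -(2*L) = (-L) + (-L) by ring, Real.exp_add, Real.exp_neg,
      Real.exp_log (div_pos hnpos hδ.1), inv_div]
    ring
  have htail : (P {ω | 0.7 * N ≤ S ω}).toReal ≤ δ / (n:ℝ)^2 := by
    have h2N : (2:ℝ) ^ (A.card * B.card) = Real.exp (N * Real.log 2) := by
      rw [show N * Real.log 2 = ((A.card * B.card : ℕ) : ℝ) * Real.log 2 by
            push_cast [hNdef]; ring,
        Real.exp_nat_mul, Real.exp_log (by norm_num : (0:ℝ) < 2)]
    calc (P {ω | 0.7 * N ≤ S ω}).toReal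
        ≤ Real.exp (-t * (0.7 * N)) * mgf S P t := hcher
      _ ≤ Real.exp (-t * (0.7 * N)) * Real.exp (N * Real.log 2) := by
          rw [← h2N]
          exact mul_le_mul_of_nonneg_left hprod (Real.exp_pos _).le
      _ = Real.exp (-t * (0.7 * N) + N * Real.log 2) := (Real.exp_add _ _).symm
      _ ≤ Real.exp (-(2*L)) := by
          apply Real.exp_le_exp.mpr
          have h1 : (1/6) * N ≤ (0.7 * t - Real.log 2) * N :=
            mul_le_mul_of_nonneg_right hc hN0
          nlinarith
      _ = (δ / n)^2 := hexpL
      _ = δ^2 / (n:ℝ)^2 := div_pow δ _ 2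
      _ ≤ δ / (n:ℝ)^2 := by
          apply div_le_div_of_nonneg_right ?_ (by positivity)
          nlinarith [hδ.1, hδ.2]
  -- conclude
  have hsetT : {ω | 0.3 * N ≤
      (((A ×ˢ B).filter (fun xy => Bq xy.1 xy.2 ω = true)).card : ℝ)}
      = {ω | S ω ≤ 0.7 * N} := by
    ext ω
    have := hcount ω
    simp only [Set.mem_setOf_eq]
    constructor <;> intro h <;> linarith
  rw [hsetT]
  have hmT : MeasurableSet {ω | S ω ≤ 0.7 * N} :=
    measurableSet_le hSmeas measurable_const
  have hcompl : (P {ω | S ω ≤ 0.7 * N}ᶜ).toReal = 1 - (P {ω | S ω ≤ 0.7 * N}).toReal := by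
    rw [prob_compl_eq_one_sub hmT,
      ENNReal.toReal_sub_of_le prob_le_one (by norm_num)]
    simp
  have hsub : {ω | S ω ≤ 0.7 * N}ᶜ ⊆ {ω | 0.7 * N ≤ S ω} := by
    intro ω hω
    simp only [Set.mem_compl_iff, Set.mem_setOf_eq, not_le] at hω
    exact hω.le
  have : (P {ω | S ω ≤ 0.7 * N}ᶜ).toReal ≤ δ / (n:ℝ)^2 :=
    le_trans (ENNReal.toReal_mono (measure_ne_top P _) (measure_mono hsub)) htail
  linarith [hcompl ▸ this]
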